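/- arXiv:1006.1101 — 3 statements merged into one kernel-verified Lean document; each statement's English description precedes it below -/
import Mathlib

section
/- The second-order differential operators Δ_{kl} = (x_k y_l − x_l y_k)(∂²/∂x_k∂y_l − ∂²/∂x_l∂y_k) on functions of 2n variables (x_1,y_1,...,x_n,y_n) satisfy the Kohno relations: [Δ_{ij}, Δ_{kl}] = 0 when i,j,k,l are pairwise distinct, and [Δ_{ij}, Δ_{ik} + Δ_{jk}] = 0 for distinct i,j,k. -/
open scoped BigOperators

namespace Stmt3

variable (n : ℕ)

/-- Polynomials in the `2n` variables `x_1, …, x_n, y_1, …, y_n`: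
`x_k` is the variable `(k, false)` and `y_k` is the variable `(k, true)`. -/
abbrev P (n : ℕ) := MvPolynomial (Fin n × Bool) ℝ

/-- The algebra of linear operators on polynomials (containing the Weyl algebra). -/
abbrev Op (n : ℕ) := Module.End ℝ (P n)

noncomputable def x (k : Fin n) : P n := MvPolynomial.X (k, false)

noncomputable def y (k : Fin n) : P n := MvPolynomial.X (k, true)

/-- The operator of multiplication by a polynomial. -/
noncomputable def M (p : P n) : Op n := LinearMap.mulLeft ℝ p

/-- The partial derivative `∂/∂x_k` as a linear operator. -/
noncomputable def Dx (k : Fin n) : Op n := (MvPolynomial.pderiv (k, false)).toLinearMap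

/-- The partial derivative `∂/∂y_k` as a linear operator. -/
noncomputable def Dy (k : Fin n) : Op n := (MvPolynomial.pderiv (k, true)).toLinearMap

/-- The second-order differential operator
`Δ_{kl} = (x_k y_l − x_l y_k) (∂²/∂x_k∂y_l − ∂²/∂x_l∂y_k)`. -/
noncomputable def Δ (k l : Fin n) : Op n :=
  M n (x n k * y n l - x n l * y n k) * (Dx n k * Dy n l - Dx n l * Dy n k)

section Support

open MvPolynomial

variable (n : ℕ)

lemma M_mul (p q : P n) : M n (p * q) = M n p * M n q := by
  refine LinearMap.ext fun r => ?_
  simp [M, Module.End.mul_apply, mul_assoc]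

lemma M_sub (p q : P n) : M n (p - q) = M n p - M n q := by
  refine LinearMap.ext fun r => ?_
  simp [M, sub_mul]

lemma M_zero : M n (0 : P n) = 0 := by
  refine LinearMap.ext fun r => ?_
  simp [M]

lemma M_one : M n (1 : P n) = 1 := by
  refine LinearMap.ext fun r => ?_
  simp [M]

lemma M_comm (p q : P n) : M n p * M n q = M n q * M n p := by
  refine LinearMap.ext fun r => ?_
  simp only [Module.End.mul_apply, M, LinearMap.mulLeft_apply]
  ring

lemma D_comm (v w : Fin n × Bool) :
    ((pderiv v).toLinearMap : Op n) * (pderiv w).toLinearMap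
      = (pderiv w).toLinearMap * (pderiv v).toLinearMap := by
  rcases eq_or_ne v w with rfl | hvw
  · rfl
  refine LinearMap.ext fun p => ?_
  simp only [Module.End.mul_apply, Derivation.coeFn_coe]
  induction p using MvPolynomial.induction_on' with
  | add p q hp hq => simp [hp, hq]
  | monomial s a =>
    simp only [pderiv_monomial]
    have h1 : ((s - Finsupp.single w 1 : Fin n × Bool →₀ ℕ)) v = s v := by
      rw [Finsupp.tsub_apply, Finsupp.single_eq_of_ne hvw, tsub_zero]
    have h2 : ((s - Finsupp.single v 1 : Fin n × Bool →₀ ℕ)) w = s w := by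
      rw [Finsupp.tsub_apply, Finsupp.single_eq_of_ne hvw.symm, tsub_zero]
    rw [h1, h2, tsub_right_comm, mul_right_comm]

lemma D_M (v : Fin n × Bool) (p : P n) :
    ((pderiv v).toLinearMap : Op n) * M n p
      = M n p * (pderiv v).toLinearMap + M n (pderiv v p) := by
  refine LinearMap.ext fun q => ?_
  simp only [Module.End.mul_apply, LinearMap.add_apply, M, LinearMap.mulLeft_apply,
    Derivation.coeFn_coe, pderiv_mul]
  ring

lemma D_M_of_zero (v : Fin n × Bool) (p : P n) (h : pderiv v p = 0) :
    ((pderiv v).toLinearMap : Op n) * M n p = M n p * (pderiv v).toLinearMap := by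
  rw [D_M, h, M_zero, add_zero]

lemma D_commute_M (v : Fin n × Bool) (p : P n) (h : pderiv v p = 0) :
    Commute ((pderiv v).toLinearMap : Op n) (M n p) :=
  D_M_of_zero n v p h

lemma pderiv_cross_zero (v : Fin n) (b : Bool) (c d : Fin n) (hc : c ≠ v) (hd : d ≠ v) :
    pderiv (v, b) (x n c * y n d - x n d * y n c) = 0 := by
  have hxc : pderiv (v, b) (x n c) = 0 := pderiv_X_of_ne (by simp [hc])
  have hxd : pderiv (v, b) (x n d) = 0 := pderiv_X_of_ne (by simp [hd])
  have hyc : pderiv (v, b) (y n c) = 0 := pderiv_X_of_ne (by simp [hc])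
  have hyd : pderiv (v, b) (y n d) = 0 := pderiv_X_of_ne (by simp [hd])
  simp [pderiv_mul, hxc, hxd, hyc, hyd]

lemma DxDx_comm (a b : Fin n) : Dx n a * Dx n b = Dx n b * Dx n a := D_comm n _ _
lemma DyDy_comm (a b : Fin n) : Dy n a * Dy n b = Dy n b * Dy n a := D_comm n _ _
lemma DxDy_comm (a b : Fin n) : Dx n a * Dy n b = Dy n b * Dx n a := D_comm n _ _
lemma DyDx_comm (a b : Fin n) : Dy n a * Dx n b = Dx n b * Dy n a := D_comm n _ _

lemma Dx_Mx_self (a : Fin n) : Dx n a * M n (x n a) = M n (x n a) * Dx n a + 1 := by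
  rw [Dx, x, D_M, pderiv_X_self, M_one]

lemma Dy_My_self (a : Fin n) : Dy n a * M n (y n a) = M n (y n a) * Dy n a + 1 := by
  rw [Dy, y, D_M, pderiv_X_self, M_one]

lemma Dx_Mx_ne {a b : Fin n} (h : a ≠ b) : Dx n a * M n (x n b) = M n (x n b) * Dx n a := by
  rw [Dx, x, D_M_of_zero]
  exact pderiv_X_of_ne (by simp [h.symm])

lemma Dy_My_ne {a b : Fin n} (h : a ≠ b) : Dy n a * M n (y n b) = M n (y n b) * Dy n a := by
  rw [Dy, y, D_M_of_zero]
  exact pderiv_X_of_ne (by simp [h.symm])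

lemma Dx_My (a b : Fin n) : Dx n a * M n (y n b) = M n (y n b) * Dx n a := by
  rw [Dx, y, D_M_of_zero]
  exact pderiv_X_of_ne (by simp)

lemma Dy_Mx (a b : Fin n) : Dy n a * M n (x n b) = M n (x n b) * Dy n a := by
  rw [Dy, x, D_M_of_zero]
  exact pderiv_X_of_ne (by simp)

end Support

theorem kohno_aux {R : Type*} [Ring R] (a b c d e f A B C D E F : R)
    (hba : b * a = a * b)
    (hca : c * a = a * c)
    (hcb : c * b = b * c)
    (hda : d * a = a * d)
    (hdb : d * b = b * d)
    (hdc : d * c = c * d)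
    (hea : e * a = a * e)
    (heb : e * b = b * e)
    (hec : e * c = c * e)
    (hed : e * d = d * e)
    (hfa : f * a = a * f)
    (hfb : f * b = b * f)
    (hfc : f * c = c * f)
    (hfd : f * d = d * f)
    (hfe : f * e = e * f)
    (hAa : A * a = a * A + 1)
    (hAb : A * b = b * A)
    (hAc : A * c = c * A)
    (hAd : A * d = d * A)
    (hAe : A * e = e * A)
    (hAf : A * f = f * A)
    (hBa : B * a = a * B)
    (hBb : B * b = b * B + 1)
    (hBc : B * c = c * B)
    (hBd : B * d = d * B)
    (hBe : B * e = e * B)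
    (hBf : B * f = f * B)
    (hBA : B * A = A * B)
    (hCa : C * a = a * C)
    (hCb : C * b = b * C)
    (hCc : C * c = c * C + 1)
    (hCd : C * d = d * C)
    (hCe : C * e = e * C)
    (hCf : C * f = f * C)
    (hCA : C * A = A * C)
    (hCB : C * B = B * C)
    (hDa : D * a = a * D)
    (hDb : D * b = b * D)
    (hDc : D * c = c * D)
    (hDd : D * d = d * D + 1)
    (hDe : D * e = e * D)
    (hDf : D * f = f * D)
    (hDA : D * A = A * D)
    (hDB : D * B = B * D)
    (hDC : D * C = C * D)
    (hEa : E * a = a * E)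
    (hEb : E * b = b * E)
    (hEc : E * c = c * E)
    (hEd : E * d = d * E)
    (hEe : E * e = e * E + 1)
    (hEf : E * f = f * E)
    (hEA : E * A = A * E)
    (hEB : E * B = B * E)
    (hEC : E * C = C * E)
    (hED : E * D = D * E)
    (hFa : F * a = a * F)
    (hFb : F * b = b * F)
    (hFc : F * c = c * F)
    (hFd : F * d = d * F)
    (hFe : F * e = e * F)
    (hFf : F * f = f * F + 1)
    (hFA : F * A = A * F)
    (hFB : F * B = B * F)
    (hFC : F * C = C * F)
    (hFD : F * D = D * F)
    (hFE : F * E = E * F) :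
    ((a*d - c*b)*(A*D - C*B)) * (((a*f - e*b)*(A*F - E*B)) + ((c*f - e*d)*(C*F - E*D)))
      - (((a*f - e*b)*(A*F - E*B)) + ((c*f - e*d)*(C*F - E*D))) * ((a*d - c*b)*(A*D - C*B)) = 0 := by
  have kba : ∀ t : R, b * (a * t) = a * (b * t) := fun t => by
    rw [← mul_assoc, hba, mul_assoc]
  have kca : ∀ t : R, c * (a * t) = a * (c * t) := fun t => by
    rw [← mul_assoc, hca, mul_assoc]
  have kcb : ∀ t : R, c * (b * t) = b * (c * t) := fun t => by
    rw [← mul_assoc, hcb, mul_assoc]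
  have kda : ∀ t : R, d * (a * t) = a * (d * t) := fun t => by
    rw [← mul_assoc, hda, mul_assoc]
  have kdb : ∀ t : R, d * (b * t) = b * (d * t) := fun t => by
    rw [← mul_assoc, hdb, mul_assoc]
  have kdc : ∀ t : R, d * (c * t) = c * (d * t) := fun t => by
    rw [← mul_assoc, hdc, mul_assoc]
  have kea : ∀ t : R, e * (a * t) = a * (e * t) := fun t => by
    rw [← mul_assoc, hea, mul_assoc]
  have keb : ∀ t : R, e * (b * t) = b * (e * t) := fun t => by
    rw [← mul_assoc, heb, mul_assoc]
  have kec : ∀ t : R, e * (c * t) = c * (e * t) := fun t => by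
    rw [← mul_assoc, hec, mul_assoc]
  have ked : ∀ t : R, e * (d * t) = d * (e * t) := fun t => by
    rw [← mul_assoc, hed, mul_assoc]
  have kfa : ∀ t : R, f * (a * t) = a * (f * t) := fun t => by
    rw [← mul_assoc, hfa, mul_assoc]
  have kfb : ∀ t : R, f * (b * t) = b * (f * t) := fun t => by
    rw [← mul_assoc, hfb, mul_assoc]
  have kfc : ∀ t : R, f * (c * t) = c * (f * t) := fun t => by
    rw [← mul_assoc, hfc, mul_assoc]
  have kfd : ∀ t : R, f * (d * t) = d * (f * t) := fun t => by
    rw [← mul_assoc, hfd, mul_assoc]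
  have kfe : ∀ t : R, f * (e * t) = e * (f * t) := fun t => by
    rw [← mul_assoc, hfe, mul_assoc]
  have kAa : ∀ t : R, A * (a * t) = a * (A * t) + t := fun t => by
    rw [← mul_assoc, hAa, add_mul, one_mul, mul_assoc]
  have kAb : ∀ t : R, A * (b * t) = b * (A * t) := fun t => by
    rw [← mul_assoc, hAb, mul_assoc]
  have kAc : ∀ t : R, A * (c * t) = c * (A * t) := fun t => by
    rw [← mul_assoc, hAc, mul_assoc]
  have kAd : ∀ t : R, A * (d * t) = d * (A * t) := fun t => by
    rw [← mul_assoc, hAd, mul_assoc]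
  have kAe : ∀ t : R, A * (e * t) = e * (A * t) := fun t => by
    rw [← mul_assoc, hAe, mul_assoc]
  have kAf : ∀ t : R, A * (f * t) = f * (A * t) := fun t => by
    rw [← mul_assoc, hAf, mul_assoc]
  have kBa : ∀ t : R, B * (a * t) = a * (B * t) := fun t => by
    rw [← mul_assoc, hBa, mul_assoc]
  have kBb : ∀ t : R, B * (b * t) = b * (B * t) + t := fun t => by
    rw [← mul_assoc, hBb, add_mul, one_mul, mul_assoc]
  have kBc : ∀ t : R, B * (c * t) = c * (B * t) := fun t => by
    rw [← mul_assoc, hBc, mul_assoc]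
  have kBd : ∀ t : R, B * (d * t) = d * (B * t) := fun t => by
    rw [← mul_assoc, hBd, mul_assoc]
  have kBe : ∀ t : R, B * (e * t) = e * (B * t) := fun t => by
    rw [← mul_assoc, hBe, mul_assoc]
  have kBf : ∀ t : R, B * (f * t) = f * (B * t) := fun t => by
    rw [← mul_assoc, hBf, mul_assoc]
  have kBA : ∀ t : R, B * (A * t) = A * (B * t) := fun t => by
    rw [← mul_assoc, hBA, mul_assoc]
  have kCa : ∀ t : R, C * (a * t) = a * (C * t) := fun t => by
    rw [← mul_assoc, hCa, mul_assoc]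
  have kCb : ∀ t : R, C * (b * t) = b * (C * t) := fun t => by
    rw [← mul_assoc, hCb, mul_assoc]
  have kCc : ∀ t : R, C * (c * t) = c * (C * t) + t := fun t => by
    rw [← mul_assoc, hCc, add_mul, one_mul, mul_assoc]
  have kCd : ∀ t : R, C * (d * t) = d * (C * t) := fun t => by
    rw [← mul_assoc, hCd, mul_assoc]
  have kCe : ∀ t : R, C * (e * t) = e * (C * t) := fun t => by
    rw [← mul_assoc, hCe, mul_assoc]
  have kCf : ∀ t : R, C * (f * t) = f * (C * t) := fun t => by
    rw [← mul_assoc, hCf, mul_assoc]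
  have kCA : ∀ t : R, C * (A * t) = A * (C * t) := fun t => by
    rw [← mul_assoc, hCA, mul_assoc]
  have kCB : ∀ t : R, C * (B * t) = B * (C * t) := fun t => by
    rw [← mul_assoc, hCB, mul_assoc]
  have kDa : ∀ t : R, D * (a * t) = a * (D * t) := fun t => by
    rw [← mul_assoc, hDa, mul_assoc]
  have kDb : ∀ t : R, D * (b * t) = b * (D * t) := fun t => by
    rw [← mul_assoc, hDb, mul_assoc]
  have kDc : ∀ t : R, D * (c * t) = c * (D * t) := fun t => by
    rw [← mul_assoc, hDc, mul_assoc]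
  have kDd : ∀ t : R, D * (d * t) = d * (D * t) + t := fun t => by
    rw [← mul_assoc, hDd, add_mul, one_mul, mul_assoc]
  have kDe : ∀ t : R, D * (e * t) = e * (D * t) := fun t => by
    rw [← mul_assoc, hDe, mul_assoc]
  have kDf : ∀ t : R, D * (f * t) = f * (D * t) := fun t => by
    rw [← mul_assoc, hDf, mul_assoc]
  have kDA : ∀ t : R, D * (A * t) = A * (D * t) := fun t => by
    rw [← mul_assoc, hDA, mul_assoc]
  have kDB : ∀ t : R, D * (B * t) = B * (D * t) := fun t => by
    rw [← mul_assoc, hDB, mul_assoc]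
  have kDC : ∀ t : R, D * (C * t) = C * (D * t) := fun t => by
    rw [← mul_assoc, hDC, mul_assoc]
  have kEa : ∀ t : R, E * (a * t) = a * (E * t) := fun t => by
    rw [← mul_assoc, hEa, mul_assoc]
  have kEb : ∀ t : R, E * (b * t) = b * (E * t) := fun t => by
    rw [← mul_assoc, hEb, mul_assoc]
  have kEc : ∀ t : R, E * (c * t) = c * (E * t) := fun t => by
    rw [← mul_assoc, hEc, mul_assoc]
  have kEd : ∀ t : R, E * (d * t) = d * (E * t) := fun t => by
    rw [← mul_assoc, hEd, mul_assoc]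
  have kEe : ∀ t : R, E * (e * t) = e * (E * t) + t := fun t => by
    rw [← mul_assoc, hEe, add_mul, one_mul, mul_assoc]
  have kEf : ∀ t : R, E * (f * t) = f * (E * t) := fun t => by
    rw [← mul_assoc, hEf, mul_assoc]
  have kEA : ∀ t : R, E * (A * t) = A * (E * t) := fun t => by
    rw [← mul_assoc, hEA, mul_assoc]
  have kEB : ∀ t : R, E * (B * t) = B * (E * t) := fun t => by
    rw [← mul_assoc, hEB, mul_assoc]
  have kEC : ∀ t : R, E * (C * t) = C * (E * t) := fun t => by
    rw [← mul_assoc, hEC, mul_assoc]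
  have kED : ∀ t : R, E * (D * t) = D * (E * t) := fun t => by
    rw [← mul_assoc, hED, mul_assoc]
  have kFa : ∀ t : R, F * (a * t) = a * (F * t) := fun t => by
    rw [← mul_assoc, hFa, mul_assoc]
  have kFb : ∀ t : R, F * (b * t) = b * (F * t) := fun t => by
    rw [← mul_assoc, hFb, mul_assoc]
  have kFc : ∀ t : R, F * (c * t) = c * (F * t) := fun t => by
    rw [← mul_assoc, hFc, mul_assoc]
  have kFd : ∀ t : R, F * (d * t) = d * (F * t) := fun t => by
    rw [← mul_assoc, hFd, mul_assoc]
  have kFe : ∀ t : R, F * (e * t) = e * (F * t) := fun t => by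
    rw [← mul_assoc, hFe, mul_assoc]
  have kFf : ∀ t : R, F * (f * t) = f * (F * t) + t := fun t => by
    rw [← mul_assoc, hFf, add_mul, one_mul, mul_assoc]
  have kFA : ∀ t : R, F * (A * t) = A * (F * t) := fun t => by
    rw [← mul_assoc, hFA, mul_assoc]
  have kFB : ∀ t : R, F * (B * t) = B * (F * t) := fun t => by
    rw [← mul_assoc, hFB, mul_assoc]
  have kFC : ∀ t : R, F * (C * t) = C * (F * t) := fun t => by
    rw [← mul_assoc, hFC, mul_assoc]
  have kFD : ∀ t : R, F * (D * t) = D * (F * t) := fun t => by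
    rw [← mul_assoc, hFD, mul_assoc]
  have kFE : ∀ t : R, F * (E * t) = E * (F * t) := fun t => by
    rw [← mul_assoc, hFE, mul_assoc]
  simp only [mul_sub, sub_mul, mul_add, add_mul, mul_assoc, kba, kca, kcb, kda, kdb, kdc, kea, keb, kec, ked, kfa, kfb, kfc, kfd, kfe, kAa, kAb, kAc, kAd, kAe, kAf, kBa, kBb, kBc, kBd, kBe, kBf, kBA, kCa, kCb, kCc, kCd, kCe, kCf, kCA, kCB, kDa, kDb, kDc, kDd, kDe, kDf, kDA, kDB, kDC, kEa, kEb, kEc, kEd, kEe, kEf, kEA, kEB, kEC, kED, kFa, kFb, kFc, kFd, kFe, kFf, kFA, kFB, kFC, kFD, kFE, hba, hca, hcb, hda, hdb, hdc, hea, heb, hec, hed, hfa, hfb, hfc, hfd, hfe, hAa, hAb, hAc, hAd, hAe, hAf, hBa, hBb, hBc, hBd, hBe, hBf, hBA, hCa, hCb, hCc, hCd, hCe, hCf, hCA, hCB, hDa, hDb, hDc, hDd, hDe, hDf, hDA, hDB, hDC, hEa, hEb, hEc, hEd, hEe, hEf, hEA, hEB, hEC, hED, hFa, hFb, hFc, hFd,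 hFe, hFf, hFA, hFB, hFC, hFD, hFE]
  abel


/-- The operators `Δ_{kl} = (x_k y_l − x_l y_k)(∂²/∂x_k∂y_l − ∂²/∂x_l∂y_k)` satisfy the
Kohno relations: `[Δ_{ij}, Δ_{kl}] = 0` for pairwise distinct `i, j, k, l`, and
`[Δ_{ij}, Δ_{ik} + Δ_{jk}] = 0` for distinct `i, j, k`. -/
theorem differential_operators_satisfy_kohno_relations
    (i j k l : Fin n)
    (hij : i ≠ j) (hik : i ≠ k) (hil : i ≠ l) (hjk : j ≠ k) (hjl : j ≠ l) (hkl : k ≠ l) :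
    Δ n i j * Δ n k l - Δ n k l * Δ n i j = 0 ∧
    Δ n i j * (Δ n i k + Δ n j k) - (Δ n i k + Δ n j k) * Δ n i j = 0 := by
  constructor
  · -- pairwise disjoint indices: everything commutes
    have dd : ∀ u v : Fin n × Bool, Commute ((MvPolynomial.pderiv u).toLinearMap : Op n)
        ((MvPolynomial.pderiv v).toLinearMap) := fun u v => D_comm n u v
    have hcx : ∀ (a : Fin n) (b : Bool) (c d : Fin n), c ≠ a → d ≠ a →
        Commute ((MvPolynomial.pderiv (a, b)).toLinearMap : Op n)
          (M n (x n c * y n d - x n d * y n c)) :=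
      fun a b c d h1 h2 => D_commute_M n (a, b) _ (pderiv_cross_zero n a b c d h1 h2)
    have hp : Commute (M n (x n i * y n j - x n j * y n i))
        (M n (x n k * y n l - x n l * y n k)) := M_comm n _ _
    have hps : Commute (M n (x n i * y n j - x n j * y n i))
        (Dx n k * Dy n l - Dx n l * Dy n k) :=
      ((hcx k false i j hik hjk).symm.mul_right
          (hcx l true i j hil hjl).symm).sub_right
        ((hcx l false i j hil hjl).symm.mul_right
          (hcx k true i j hik hjk).symm)
    have hqr : Commute (Dx n i * Dy n j - Dx n j * Dy n i)
        (M n (x n k * y n l - x n l * y n k)) :=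
      ((hcx i false k l hik.symm hil.symm).mul_left (hcx j true k l hjk.symm hjl.symm)).sub_left
        ((hcx j false k l hjk.symm hjl.symm).mul_left (hcx i true k l hik.symm hil.symm))
    have hA : ∀ u : Fin n × Bool, Commute ((MvPolynomial.pderiv u).toLinearMap : Op n)
        (Dx n k * Dy n l - Dx n l * Dy n k) :=
      fun u => ((dd u _).mul_right (dd u _)).sub_right ((dd u _).mul_right (dd u _))
    have hqs : Commute (Dx n i * Dy n j - Dx n j * Dy n i)
        (Dx n k * Dy n l - Dx n l * Dy n k) :=
      ((hA (i, false)).mul_left (hA (j, true))).sub_left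
        ((hA (j, false)).mul_left (hA (i, true)))
    have hΔ : Commute (Δ n i j) (Δ n k l) := (hp.mul_right hps).mul_left (hqr.mul_right hqs)
    exact sub_eq_zero_of_eq hΔ.eq
  · simp only [Δ, M_sub, M_mul]
    exact kohno_aux (M n (x n i)) (M n (y n i)) (M n (x n j)) (M n (y n j)) (M n (x n k)) (M n (y n k))
      (Dx n i) (Dy n i) (Dx n j) (Dy n j) (Dx n k) (Dy n k)
      (M_comm n (y n i) (x n i))
      (M_comm n (x n j) (x n i))
      (M_comm n (x n j) (y n i))
      (M_comm n (y n j) (x n i))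
      (M_comm n (y n j) (y n i))
      (M_comm n (y n j) (x n j))
      (M_comm n (x n k) (x n i))
      (M_comm n (x n k) (y n i))
      (M_comm n (x n k) (x n j))
      (M_comm n (x n k) (y n j))
      (M_comm n (y n k) (x n i))
      (M_comm n (y n k) (y n i))
      (M_comm n (y n k) (x n j))
      (M_comm n (y n k) (y n j))
      (M_comm n (y n k) (x n k))
      (Dx_Mx_self n i)
      (Dx_My n i i)
      (Dx_Mx_ne n hij)
      (Dx_My n i j)
      (Dx_Mx_ne n hik)
      (Dx_My n i k)
      (Dy_Mx n i i)
      (Dy_My_self n i)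
      (Dy_Mx n i j)
      (Dy_My_ne n hij)
      (Dy_Mx n i k)
      (Dy_My_ne n hik)
      (DyDx_comm n i i)
      (Dx_Mx_ne n hij.symm)
      (Dx_My n j i)
      (Dx_Mx_self n j)
      (Dx_My n j j)
      (Dx_Mx_ne n hjk)
      (Dx_My n j k)
      (DxDx_comm n j i)
      (DxDy_comm n j i)
      (Dy_Mx n j i)
      (Dy_My_ne n hij.symm)
      (Dy_Mx n j j)
      (Dy_My_self n j)
      (Dy_Mx n j k)
      (Dy_My_ne n hjk)
      (DyDx_comm n j i)
      (DyDy_comm n j i)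
      (DyDx_comm n j j)
      (Dx_Mx_ne n hik.symm)
      (Dx_My n k i)
      (Dx_Mx_ne n hjk.symm)
      (Dx_My n k j)
      (Dx_Mx_self n k)
      (Dx_My n k k)
      (DxDx_comm n k i)
      (DxDy_comm n k i)
      (DxDx_comm n k j)
      (DxDy_comm n k j)
      (Dy_Mx n k i)
      (Dy_My_ne n hik.symm)
      (Dy_Mx n k j)
      (Dy_My_ne n hjk.symm)
      (Dy_Mx n k k)
      (Dy_My_self n k)
      (DyDx_comm n k i)
      (DyDy_comm n k i)
      (DyDx_comm n k j)
      (DyDy_comm n k j)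
      (DyDx_comm n k k)


end Stmt3
end

section
/- If the Poincaré series of dimensions of homogeneous components of U(br_n) is Σ_k t^k dim U(br_n)^{[k]} = Π_{j=1}^{n-1} (1−jt)^{−1}, then the dimension of the degree-k homogeneous component of the Kohno Lie algebra br_n is dim br_n^{[k]} = (1/k) Σ_{d|k} μ(d) (Σ_{i=1}^{n-1} i^{k/d}), where μ is the Möbius function. Equivalently (as a purely generating-function statement): if graded vector spaces L^{[k]} satisfy the Poincaré–Birkhoff–Witt product formula Π_k (1−t^k)^{−dim L^{[k]}} = Π_{j=1}^{n-1}(1−jt)^{−1}, then dim L^{[k]} = (1/k) Σ_{d|k} μ(d) Σ_{i=1}^{n-1} i^{k/d}. -/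
open scoped BigOperators
open PowerSeries

namespace Stmt4

noncomputable abbrev D : ℚ⟦X⟧ → ℚ⟦X⟧ := fun f => PowerSeries.derivative ℚ f

lemma ld_mul (f g : ℚ⟦X⟧) (hf : constantCoeff f ≠ 0) (hg : constantCoeff g ≠ 0) :
    D (f * g) * (f * g)⁻¹ = D f * f⁻¹ + D g * g⁻¹ := by
  have h1 : f * f⁻¹ = 1 := PowerSeries.mul_inv_cancel f hf
  have h2 : g * g⁻¹ = 1 := PowerSeries.mul_inv_cancel g hg
  rw [PowerSeries.mul_inv_rev]
  have : D (f * g) = f * D g + g * D f := by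
    simpa [smul_eq_mul] using Derivation.leibniz (PowerSeries.derivative ℚ) f g
  rw [this]
  linear_combination (D g * g⁻¹) * h1 + (D f * f⁻¹) * h2

lemma ld_pow (f : ℚ⟦X⟧) (hf : constantCoeff f ≠ 0) (e : ℕ) :
    D (f ^ e) * (f ^ e)⁻¹ = (e : ℚ⟦X⟧) * (D f * f⁻¹) := by
  induction e with
  | zero => simp [D]
  | succ e ih =>
    have hfe : constantCoeff (f ^ e) ≠ 0 := by simp [map_pow, pow_ne_zero, hf]
    rw [pow_succ, ld_mul _ _ hfe hf, ih]
    push_cast; ring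

lemma ld_prod {ι : Type*} (s : Finset ι) (f : ι → ℚ⟦X⟧)
    (hf : ∀ i ∈ s, constantCoeff (f i) ≠ 0) :
    D (∏ i ∈ s, f i) * (∏ i ∈ s, f i)⁻¹ = ∑ i ∈ s, D (f i) * (f i)⁻¹ := by
  induction s using Finset.cons_induction with
  | empty => simp [D]
  | cons a s ha ih =>
    rw [Finset.prod_cons, Finset.sum_cons,
      ld_mul _ _ (hf a (Finset.mem_cons_self a s)) ?_,
      ih (fun i hi => hf i (Finset.mem_cons_of_mem hi))]
    rw [map_prod]
    exact Finset.prod_ne_zero_iff.2 fun i hi => hf i (Finset.mem_cons_of_mem hi)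

/-- inverse of `1 - X^k` -/
noncomputable def Sk (k : ℕ) : ℚ⟦X⟧ := PowerSeries.mk fun m => if k ∣ m then 1 else 0

lemma const_one_sub_X_pow (k : ℕ) (hk : 1 ≤ k) :
    constantCoeff (1 - (X : ℚ⟦X⟧) ^ k) = 1 := by
  simp [map_pow, PowerSeries.constantCoeff_X, zero_pow (by omega : k ≠ 0)]

lemma Sk_inv (k : ℕ) (hk : 1 ≤ k) : (1 - (X : ℚ⟦X⟧) ^ k)⁻¹ = Sk k := by
  have hc : constantCoeff (1 - (X : ℚ⟦X⟧) ^ k) ≠ 0 := by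
    rw [const_one_sub_X_pow k hk]; norm_num
  symm
  rw [PowerSeries.eq_inv_iff_mul_eq_one hc]
  ext m
  rw [mul_comm, sub_mul, one_mul, map_sub, PowerSeries.coeff_one, PowerSeries.coeff_X_pow_mul']
  simp only [Sk, PowerSeries.coeff_mk]
  rcases Nat.eq_zero_or_pos m with rfl | hm
  · simp only [Nat.dvd_zero, if_pos, if_neg (by omega : ¬ k ≤ 0)]
    simp [(by omega : ¬ k ≤ 0)]
  · rw [if_neg (by omega : ¬ m = 0)]
    by_cases h : k ≤ m
    · rw [if_pos h]
      have : k ∣ m ↔ k ∣ m - k := by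
        constructor
        · exact fun h' => (Nat.dvd_sub h' dvd_rfl)
        · intro h'; have := Nat.dvd_add h' (dvd_refl k); rwa [Nat.sub_add_cancel h] at this
      rcases em (k ∣ m) with h2 | h2
      · rw [if_pos h2, if_pos (this.mp h2)]; ring
      · rw [if_neg h2, if_neg (fun hh => h2 (this.mpr hh))]; ring
    · rw [if_neg h, if_neg (fun hd => h (Nat.le_of_dvd hm hd))]; ring

/-- inverse of `1 - C j * X` -/
noncomputable def Tj (j : ℚ) : ℚ⟦X⟧ := PowerSeries.mk fun m => j ^ m

lemma Tj_inv (j : ℚ) : (1 - PowerSeries.C j * X)⁻¹ = Tj j := by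
  have hc : constantCoeff (1 - PowerSeries.C j * X) ≠ 0 := by simp
  symm
  rw [PowerSeries.eq_inv_iff_mul_eq_one hc]
  ext m
  rw [mul_comm, sub_mul, one_mul, map_sub, PowerSeries.coeff_one, mul_assoc]
  simp only [PowerSeries.coeff_C_mul]
  cases m with
  | zero => simp [Tj]
  | succ m =>
      rw [PowerSeries.coeff_succ_X_mul]
      simp [Tj, pow_succ, mul_comm]

lemma XD_one_sub_X_pow (k : ℕ) (hk : 1 ≤ k) :
    (X : ℚ⟦X⟧) * D (1 - X ^ k) = -((k : ℚ⟦X⟧) * X ^ k) := by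
  have h1 : D ((X : ℚ⟦X⟧) ^ k) = (k : ℕ) • ((X : ℚ⟦X⟧) ^ (k - 1)) • (1 : ℚ⟦X⟧) := by
    have := Derivation.leibniz_pow (PowerSeries.derivative ℚ) (a := (X : ℚ⟦X⟧)) k
    rwa [PowerSeries.derivative_X] at this
  have h2 : D (1 - (X : ℚ⟦X⟧) ^ k) = -D ((X : ℚ⟦X⟧) ^ k) := by
    show (PowerSeries.derivative ℚ) _ = _
    rw [map_sub]; simp [D]
  rw [h2, h1]
  simp only [smul_eq_mul, nsmul_eq_mul, mul_one]
  have hx : (X : ℚ⟦X⟧) * X ^ (k - 1) = X ^ k := by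
    rw [← pow_succ']
    congr 1; omega
  calc (X:ℚ⟦X⟧) * -((k:ℚ⟦X⟧) * X ^ (k-1)) = -((k:ℚ⟦X⟧) * (X * X ^ (k-1))) := by ring
  _ = -((k:ℚ⟦X⟧) * X ^ k) := by rw [hx]

lemma coeff_X_pow_mul_Sk (k m : ℕ) (hk : 1 ≤ k) (hm : 1 ≤ m) :
    PowerSeries.coeff m ((X : ℚ⟦X⟧) ^ k * Sk k) = if k ∣ m then 1 else 0 := by
  rw [PowerSeries.coeff_X_pow_mul']
  by_cases h : k ≤ m
  · rw [if_pos h]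
    simp only [Sk, PowerSeries.coeff_mk]
    have hiff : k ∣ m - k ↔ k ∣ m := by
      constructor
      · intro h'; have := Nat.dvd_add h' (dvd_refl k); rwa [Nat.sub_add_cancel h] at this
      · exact fun h' => Nat.dvd_sub h' dvd_rfl
    rw [if_congr hiff rfl rfl]
  · rw [if_neg h, eq_comm, if_neg (fun hd => h (Nat.le_of_dvd hm hd))]

/-- Key identity: power sums of divisors. -/
lemma key (n : ℕ) (d : ℕ → ℕ)
    (hPBW : ∀ N m : ℕ, m ≤ N →
      (PowerSeries.coeff m) (∏ k ∈ Finset.Icc 1 N, (1 - (X : PowerSeries ℚ) ^ k) ^ (d k)) =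
      (PowerSeries.coeff m) (∏ j ∈ Finset.Icc 1 (n - 1),
          (1 - PowerSeries.C (j : ℚ) * X)))
    (m : ℕ) (hm : 1 ≤ m) :
    ∑ k ∈ m.divisors, ((k : ℚ) * (d k : ℚ)) = ∑ j ∈ Finset.Icc 1 (n - 1), (j : ℚ) ^ m := by
  set N := m with hN
  set F : ℚ⟦X⟧ := ∏ k ∈ Finset.Icc 1 N, (1 - (X : ℚ⟦X⟧) ^ k) ^ (d k) with hF
  set G : ℚ⟦X⟧ := ∏ j ∈ Finset.Icc 1 (n - 1), (1 - PowerSeries.C (j : ℚ) * X) with hG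
  have hFc : constantCoeff F = 1 := by
    rw [hF, map_prod]
    apply Finset.prod_eq_one
    intro k hk
    rw [map_pow, const_one_sub_X_pow k (Finset.mem_Icc.mp hk).1, one_pow]
  have hGc : constantCoeff G = 1 := by
    rw [hG, map_prod]
    apply Finset.prod_eq_one
    intro j hj
    simp
  have hFc' : constantCoeff F ≠ 0 := by rw [hFc]; norm_num
  have hGc' : constantCoeff G ≠ 0 := by rw [hGc]; norm_num
  have hFi : F * F⁻¹ = 1 := PowerSeries.mul_inv_cancel F hFc'
  have hGi : G * G⁻¹ = 1 := PowerSeries.mul_inv_cancel G hGc'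
  -- congruences
  have h1 : (X : ℚ⟦X⟧) ^ (N + 1) ∣ F - G := by
    rw [PowerSeries.X_pow_dvd_iff]
    intro i hi
    rw [map_sub, hPBW N i (by omega), sub_self]
  have h2 : (X : ℚ⟦X⟧) ^ (N + 1) ∣ X * (D F - D G) := by
    rw [PowerSeries.X_pow_dvd_iff]
    intro i hi
    cases i with
    | zero => exact PowerSeries.coeff_zero_X_mul _
    | succ i =>
        rw [PowerSeries.coeff_succ_X_mul, map_sub]
        show PowerSeries.coeff i ((PowerSeries.derivative ℚ) F) -
          PowerSeries.coeff i ((PowerSeries.derivative ℚ) G) = 0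
        rw [PowerSeries.coeff_derivative, PowerSeries.coeff_derivative,
          hPBW N (i + 1) (by omega), sub_self]
  have h3 : (X : ℚ⟦X⟧) ^ (N + 1) ∣ (X * D F * G - X * D G * F) := by
    have hid : X * D F * G - X * D G * F
        = (X * (D F - D G)) * G + (X * D G) * (G - F) := by ring
    rw [hid]
    exact dvd_add (h2.mul_right G) (Dvd.dvd.mul_left (by
      have : G - F = -(F - G) := by ring
      rw [this]; exact h1.neg_right) (X * D G))
  have h4 : (X : ℚ⟦X⟧) ^ (N + 1) ∣ (X * D F * F⁻¹ - X * D G * G⁻¹) := by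
    have hid : X * D F * F⁻¹ - X * D G * G⁻¹
        = (X * D F * G - X * D G * F) * (F⁻¹ * G⁻¹) := by
      linear_combination (-(X * D F * F⁻¹)) * hGi + (X * D G * G⁻¹) * hFi
    rw [hid]
    exact h3.mul_right _
  have hcoeff : PowerSeries.coeff m (X * D F * F⁻¹) = PowerSeries.coeff m (X * D G * G⁻¹) := by
    have := (PowerSeries.X_pow_dvd_iff.mp h4) m (by omega)
    rw [map_sub] at this
    linarith
  -- compute LHS sum
  have hL : X * D F * F⁻¹ = ∑ k ∈ Finset.Icc 1 N,
      (d k : ℚ⟦X⟧) * (-((k : ℚ⟦X⟧) * X ^ k)) * Sk k := by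
    have hld := ld_prod (Finset.Icc 1 N) (fun k => (1 - (X : ℚ⟦X⟧) ^ k) ^ (d k)) (by
      intro k hk
      rw [map_pow, const_one_sub_X_pow k (Finset.mem_Icc.mp hk).1, one_pow]
      norm_num)
    rw [mul_assoc, hF]
    rw [hld, Finset.mul_sum]
    apply Finset.sum_congr rfl
    intro k hk
    have hk1 : 1 ≤ k := (Finset.mem_Icc.mp hk).1
    rw [ld_pow _ (by
      rw [const_one_sub_X_pow k hk1]; norm_num) (d k), Sk_inv k hk1]
    rw [← XD_one_sub_X_pow k hk1]
    ring
  have hR : X * D G * G⁻¹ = ∑ j ∈ Finset.Icc 1 (n - 1),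
      (-(PowerSeries.C (j : ℚ) * X)) * Tj (j : ℚ) := by
    have hld := ld_prod (Finset.Icc 1 (n - 1))
        (fun j => (1 - PowerSeries.C (j : ℚ) * X)) (by intro j hj; simp)
    rw [mul_assoc, hG, hld, Finset.mul_sum]
    apply Finset.sum_congr rfl
    intro j hj
    rw [Tj_inv]
    have hd : D (1 - PowerSeries.C (j : ℚ) * X) = -(PowerSeries.C (j : ℚ)) := by
      show (PowerSeries.derivative ℚ) _ = _
      rw [map_sub]
      have : (PowerSeries.derivative ℚ) (PowerSeries.C (j : ℚ) * X)
          = PowerSeries.C (j : ℚ) := by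
        rw [Derivation.leibniz, PowerSeries.derivative_X, PowerSeries.derivative_C,
          smul_eq_mul, smul_eq_mul]
        ring
      rw [this]; simp
    rw [hd]; ring
  -- coefficient of LHS
  obtain ⟨m', rfl⟩ : ∃ m', m = m' + 1 := ⟨m - 1, by omega⟩
  have hcL : PowerSeries.coeff (m' + 1) (X * D F * F⁻¹)
      = -∑ k ∈ (m' + 1).divisors, ((k : ℚ) * (d k : ℚ)) := by
    rw [hL, map_sum]
    have hstep : ∀ k ∈ Finset.Icc 1 N,
        PowerSeries.coeff (m' + 1) ((d k : ℚ⟦X⟧) * (-((k : ℚ⟦X⟧) * X ^ k)) * Sk k)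
        = if k ∣ (m' + 1) then -((k : ℚ) * (d k : ℚ)) else 0 := by
      intro k hk
      have hk1 : 1 ≤ k := (Finset.mem_Icc.mp hk).1
      have harr : (d k : ℚ⟦X⟧) * (-((k : ℚ⟦X⟧) * X ^ k)) * Sk k
          = PowerSeries.C (-((k : ℚ) * (d k : ℚ))) * (X ^ k * Sk k) := by
        rw [map_neg, map_mul, map_natCast, map_natCast]
        ring
      rw [harr, PowerSeries.coeff_C_mul, coeff_X_pow_mul_Sk k (m' + 1) hk1 (by omega)]
      by_cases h : k ∣ (m' + 1)
      · rw [if_pos h, if_pos h]; ring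
      · rw [if_neg h, if_neg h]; ring
    rw [Finset.sum_congr rfl hstep, ← Finset.sum_filter]
    have hset : (Finset.Icc 1 N).filter (· ∣ (m' + 1)) = (m' + 1).divisors := by
      ext k
      simp only [Finset.mem_filter, Finset.mem_Icc, Nat.mem_divisors]
      constructor
      · rintro ⟨⟨h1, h2⟩, h3⟩; exact ⟨h3, by omega⟩
      · rintro ⟨h1, h2⟩
        exact ⟨⟨Nat.pos_of_dvd_of_pos h1 (by omega), by
          have := Nat.le_of_dvd (by omega) h1; omega⟩, h1⟩
    rw [hset, ← Finset.sum_neg_distrib]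
  have hcR : PowerSeries.coeff (m' + 1) (X * D G * G⁻¹)
      = -∑ j ∈ Finset.Icc 1 (n - 1), (j : ℚ) ^ (m' + 1) := by
    rw [hR, map_sum, ← Finset.sum_neg_distrib]
    apply Finset.sum_congr rfl
    intro j hj
    have harr : (-(PowerSeries.C (j : ℚ) * X)) * Tj (j : ℚ)
        = PowerSeries.C (-(j : ℚ)) * (X * Tj (j : ℚ)) := by
      rw [map_neg]; ring
    rw [harr, PowerSeries.coeff_C_mul, PowerSeries.coeff_succ_X_mul]
    simp [Tj, pow_succ]
    ring
  rw [hcL, hcR] at hcoeff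
  have := neg_injective hcoeff
  exact this

/-- Purely generating-function form of the dimension formula for the homogeneous components of
the Kohno Lie algebra `br_n`: if graded vector spaces `L^{[k]}` (of dimensions `d k`, `k ≥ 1`)
satisfy the Poincaré–Birkhoff–Witt product formula
`Π_{k≥1} (1 − t^k)^{d k} = Π_{j=1}^{n-1} (1 − j t)`
(equivalently `Π (1−t^k)^{−d k} = Π (1−jt)^{−1}`), encoded coefficientwise via partial
products, then `k · d k = Σ_{e | k} μ(e) Σ_{i=1}^{n-1} i^{k/e}`. -/
theorem dim_of_kohno_algebra_component
    (n : ℕ) (d : ℕ → ℕ)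
    (hPBW : ∀ N m : ℕ, m ≤ N →
      (PowerSeries.coeff m) (∏ k ∈ Finset.Icc 1 N, (1 - (X : PowerSeries ℚ) ^ k) ^ (d k)) =
      (PowerSeries.coeff m) (∏ j ∈ Finset.Icc 1 (n - 1),
          (1 - PowerSeries.C (j : ℚ) * X))) :
    ∀ k : ℕ, 1 ≤ k →
      (k : ℤ) * (d k : ℤ) =
        ∑ e ∈ k.divisors, (ArithmeticFunction.moebius e) *
          ∑ i ∈ Finset.Icc 1 (n - 1), (i : ℤ) ^ (k / e) := by
  intro k hk
  have hnat : ∀ m : ℕ, m > 0 → ∑ i ∈ m.divisors, ((i : ℤ) * (d i : ℤ))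
      = ∑ j ∈ Finset.Icc 1 (n - 1), (j : ℤ) ^ m := by
    intro m hm
    have hq := key n d hPBW m hm
    have hcast : ((∑ i ∈ m.divisors, ((i : ℤ) * (d i : ℤ)) : ℤ) : ℚ)
        = ((∑ j ∈ Finset.Icc 1 (n - 1), (j : ℤ) ^ m : ℤ) : ℚ) := by
      push_cast
      exact hq
    exact_mod_cast hcast
  have hmob := ArithmeticFunction.sum_eq_iff_sum_mul_moebius_eq.mp hnat k (by omega)
  rw [← hmob]
  exact Nat.sum_divisorsAntidiagonal
    (fun e f => ((ArithmeticFunction.moebius e : ℤ)) * ∑ j ∈ Finset.Icc 1 (n - 1), (j : ℤ) ^ f)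

end Stmt4
end

section
/- For a > 0, let U_a^!(g) be the set of z ∈ Ū(g) with [[z]]_a := sup_p ‖z^{[p]}‖ p! a^{−p} < ∞. If z ∈ U_a^!(g) and u ∈ U_b^!(g), then zu ∈ U_{a+b}^!(g) with [[zu]]_{a+b} ≤ [[z]]_a · [[u]]_b. Consequently U^!(g) := ∪_a U_a^!(g) is an algebra. -/
open scoped BigOperators

namespace Stmt16

variable {A : Type*} [NormedRing A]

/-- Convolution (the product of the completed graded algebra `Ū(g)` written degreewise,
so that `‖(zu)^{[r]}‖ ≤ Σ_{p+q=r} ‖z^{[p]}‖ ‖u^{[q]}‖`). -/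
noncomputable def conv (z u : ℕ → A) : ℕ → A :=
  fun r => ∑ pq ∈ Finset.HasAntidiagonal.antidiagonal r, z pq.1 * u pq.2

/-- `z ∈ U_a^!(g)`: `[[z]]_a = sup_p ‖z^{[p]}‖ p! a^{−p} < ∞`. -/
def MemUbangAt (a : ℝ) (z : ℕ → A) : Prop :=
  ∃ M : ℝ, ∀ p : ℕ, ‖z p‖ * p.factorial / a ^ p ≤ M

/-- `z ∈ U^!(g) = ∪_{a>0} U_a^!(g)`. -/
def MemUbang (z : ℕ → A) : Prop := ∃ a : ℝ, 0 < a ∧ MemUbangAt a z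

/-- Vandermonde-type identity `∑_{p+q=r} a^p/p! · b^q/q! = (a+b)^r/r!`. -/
lemma sum_aux (a b : ℝ) (r : ℕ) :
    ∑ pq ∈ Finset.HasAntidiagonal.antidiagonal r,
      (a ^ pq.1 / pq.1.factorial) * (b ^ pq.2 / pq.2.factorial)
      = (a + b) ^ r / r.factorial := by
  rw [Finset.Nat.sum_antidiagonal_eq_sum_range_succ_mk, add_pow, Finset.sum_div]
  refine Finset.sum_congr rfl fun k hk => ?_
  have hk' : k ≤ r := Nat.lt_succ_iff.mp (Finset.mem_range.mp hk)
  have h := Nat.choose_mul_factorial_mul_factorial hk'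
  have h' : (r.choose k : ℝ) * k.factorial * (r - k).factorial = r.factorial := by
    exact_mod_cast congrArg (Nat.cast : ℕ → ℝ) h
  have h1 : (k.factorial : ℝ) ≠ 0 := Nat.cast_ne_zero.mpr k.factorial_ne_zero
  have h2 : ((r - k).factorial : ℝ) ≠ 0 := Nat.cast_ne_zero.mpr (r - k).factorial_ne_zero
  have h3 : (r.factorial : ℝ) ≠ 0 := Nat.cast_ne_zero.mpr r.factorial_ne_zero
  field_simp
  linear_combination (a ^ k * b ^ (r - k)) * h'.symm

/-- The key bound. -/
lemma key_bound (a b : ℝ) (ha : 0 < a) (hb : 0 < b) (z u : ℕ → A) (La Lb : ℝ)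
    (hz : ∀ p : ℕ, ‖z p‖ * p.factorial / a ^ p ≤ La)
    (hu : ∀ q : ℕ, ‖u q‖ * q.factorial / b ^ q ≤ Lb) :
    ∀ r : ℕ, ‖conv z u r‖ * r.factorial / (a + b) ^ r ≤ La * Lb := by
  have hLa : 0 ≤ La := le_trans (norm_nonneg (z 0)) (by simpa using hz 0)
  have hLb : 0 ≤ Lb := le_trans (norm_nonneg (u 0)) (by simpa using hu 0)
  have hzb : ∀ p, ‖z p‖ ≤ La * (a ^ p / p.factorial) := by
    intro p
    rw [← mul_div_assoc, le_div_iff₀ (by positivity : (0:ℝ) < (p.factorial : ℝ))]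
    exact (div_le_iff₀ (pow_pos ha p)).mp (hz p)
  have hub : ∀ q, ‖u q‖ ≤ Lb * (b ^ q / q.factorial) := by
    intro q
    rw [← mul_div_assoc, le_div_iff₀ (by positivity : (0:ℝ) < (q.factorial : ℝ))]
    exact (div_le_iff₀ (pow_pos hb q)).mp (hu q)
  intro r
  have hstep : ‖conv z u r‖ ≤ La * Lb * ((a + b) ^ r / r.factorial) := by
    calc ‖conv z u r‖ ≤ ∑ pq ∈ Finset.HasAntidiagonal.antidiagonal r, ‖z pq.1 * u pq.2‖ :=
          norm_sum_le _ _
      _ ≤ ∑ pq ∈ Finset.HasAntidiagonal.antidiagonal r,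
            (La * (a ^ pq.1 / pq.1.factorial)) * (Lb * (b ^ pq.2 / pq.2.factorial)) := by
          refine Finset.sum_le_sum fun pq _ => ?_
          calc ‖z pq.1 * u pq.2‖ ≤ ‖z pq.1‖ * ‖u pq.2‖ := norm_mul_le _ _
            _ ≤ _ := by
                have h1 := hzb pq.1
                have h2 := hub pq.2
                have hn1 : (0:ℝ) ≤ ‖u pq.2‖ := norm_nonneg _
                have hp1 : (0:ℝ) ≤ La * (a ^ pq.1 / pq.1.factorial) := by positivity
                exact mul_le_mul h1 h2 hn1 hp1
      _ = La * Lb * ((a + b) ^ r / r.factorial) := by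
          rw [← sum_aux a b r, Finset.mul_sum]
          refine Finset.sum_congr rfl fun pq _ => by ring
  rw [div_le_iff₀ (pow_pos (by linarith) r)]
  have hfac : (0:ℝ) < r.factorial := by positivity
  rw [← mul_div_assoc, le_div_iff₀ hfac] at hstep
  linarith

/-- If `z ∈ U_a^!(g)` and `u ∈ U_b^!(g)`, then `zu ∈ U_{a+b}^!(g)` with
`[[zu]]_{a+b} ≤ [[z]]_a · [[u]]_b`: any bounds `La ≥ [[z]]_a`, `Lb ≥ [[u]]_b` give the bound
`La · Lb` for `[[zu]]_{a+b}`.  Consequently `U^!(g) = ∪_a U_a^!(g)` is closed under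
multiplication (it is an algebra). -/
theorem Ubang_mul
    (a b : ℝ) (ha : 0 < a) (hb : 0 < b) (z u : ℕ → A) (La Lb : ℝ)
    (hz : ∀ p : ℕ, ‖z p‖ * p.factorial / a ^ p ≤ La)
    (hu : ∀ q : ℕ, ‖u q‖ * q.factorial / b ^ q ≤ Lb) :
    (∀ r : ℕ, ‖conv z u r‖ * r.factorial / (a + b) ^ r ≤ La * Lb) ∧
    (∀ z' u' : ℕ → A, MemUbang z' → MemUbang u' → MemUbang (conv z' u')) := by
  refine ⟨key_bound a b ha hb z u La Lb hz hu, ?_⟩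
  rintro z' u' ⟨a', ha', M, hM⟩ ⟨b', hb', N, hN⟩
  exact ⟨a' + b', by linarith, M * N, key_bound a' b' ha' hb' z' u' M N hM hN⟩

end Stmt16
end
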